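/- Let Σ be a finite alphabet, let ν_s, ν_{s'} : Σ* → ℝ≥0 be functions on finite words, and let δ be a real number with 0 < δ < 1 such that for every nonempty word w ∈ Σ*, if ν_{s'}(w) > 0 then ν_{s'}(w) > δ^{|w|}. Then the following are equivalent: (i) there exist C > 0 and k ∈ ℕ such that ν_s(w) ≤ C·ν_{s'}(w) for all words w with |w| ≥ k (s is eventually big-O of s'); (ii) the set {w ∈ Σ* | ν_s(w) > 0 and ν_{s'}(w) = 0} is finite, and there exists C > 0 such that ν_s(w) ≤ C·(ν_{s'}(w) + δ^{|w|}) for all nonempty words w. -/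

import Mathlib

open scoped NNReal

/-- `s` is eventually big-O of `s'` iff the language difference
`{w | ν_s w > 0 ∧ ν_{s'} w = 0}` is finite and `s` is big-O of `s'` in the automaton
completed with an extra branch of weight `δ^{|w|}` on every nonempty word. -/
theorem eventually_bigO_iff_finite_diff_and_bigO_completed
    {Sigma : Type*} [Fintype Sigma] (νs νs' : List Sigma → ℝ≥0) (δ : ℝ)
    (hδ0 : 0 < δ) (hδ1 : δ < 1)
    (hlow : ∀ w : List Sigma, w ≠ [] → 0 < νs' w → δ ^ w.length < (νs' w : ℝ)) :
    (∃ C : ℝ, 0 < C ∧ ∃ k : ℕ, ∀ w : List Sigma, k ≤ w.length →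
        (νs w : ℝ) ≤ C * (νs' w : ℝ)) ↔
    ({w : List Sigma | 0 < νs w ∧ νs' w = 0}.Finite ∧
      ∃ C : ℝ, 0 < C ∧ ∀ w : List Sigma, w ≠ [] →
        (νs w : ℝ) ≤ C * ((νs' w : ℝ) + δ ^ w.length)) := by
  constructor
  · rintro ⟨C, hC, k, hk⟩
    have hfin : ({w : List Sigma | w.length < k}).Finite := List.finite_length_lt Sigma k
    constructor
    · apply hfin.subset
      rintro w ⟨hw1, hw2⟩
      by_contra h
      simp only [Set.mem_setOf_eq, not_lt] at h
      have h2 := hk w h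
      rw [hw2] at h2
      simp only [NNReal.coe_zero, mul_zero] at h2
      have : (0 : ℝ) < νs w := by exact_mod_cast hw1
      linarith
    · obtain ⟨b, hb⟩ := (hfin.image (fun w => (νs w : ℝ) / δ ^ w.length)).bddAbove
      refine ⟨max C (max b 1), lt_of_lt_of_le hC (le_max_left _ _), ?_⟩
      intro w _
      have hδpow : (0 : ℝ) < δ ^ w.length := pow_pos hδ0 _
      have hν' : (0 : ℝ) ≤ (νs' w : ℝ) := (νs' w).coe_nonneg
      by_cases hlen : k ≤ w.length
      · have h2 := hk w hlen
        have hCm : C ≤ max C (max b 1) := le_max_left _ _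
        calc (νs w : ℝ) ≤ C * (νs' w : ℝ) := h2
          _ ≤ max C (max b 1) * ((νs' w : ℝ) + δ ^ w.length) := by
            have h1 : (0:ℝ) < max C (max b 1) := lt_of_lt_of_le hC (le_max_left _ _)
            nlinarith
      · push_neg at hlen
        have hmem : (νs w : ℝ) / δ ^ w.length ∈
            (fun w => (νs w : ℝ) / δ ^ w.length) '' {w : List Sigma | w.length < k} :=
          ⟨w, hlen, rfl⟩
        have hble := hb hmem
        have h2 : (νs w : ℝ) ≤ b * δ ^ w.length := by
          rw [div_le_iff₀ hδpow] at hble; linarith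
        have hbm : b ≤ max C (max b 1) := le_trans (le_max_left _ _) (le_max_right _ _)
        have h1 : (0:ℝ) < max C (max b 1) := lt_of_lt_of_le hC (le_max_left _ _)
        nlinarith
  · rintro ⟨hF, C, hC, hbig⟩
    obtain ⟨N, hN⟩ := (hF.image List.length).bddAbove
    refine ⟨2 * C, by linarith, N + 1, ?_⟩
    intro w hw
    have hne : w ≠ [] := by
      intro h; subst h; simp at hw
    by_cases h0 : νs' w = 0
    · by_cases hs : νs w = 0
      · rw [hs, h0]; simp
      · have hmem : w ∈ {w : List Sigma | 0 < νs w ∧ νs' w = 0} :=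
          ⟨lt_of_le_of_ne zero_le (Ne.symm hs), h0⟩
        have := hN ⟨w, hmem, rfl⟩
        omega
    · have hpos : 0 < νs' w := lt_of_le_of_ne zero_le (Ne.symm h0)
      have hd := hlow w hne hpos
      have h2 := hbig w hne
      have : (νs w : ℝ) ≤ C * ((νs' w : ℝ) + (νs' w : ℝ)) := by nlinarith
      linarith
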